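/- Let κ ≥ 0 and let g : ℝ³ \ {0} → ℝ be given by g(z) = (1 − e^{−κ‖z‖})/(4π‖z‖). Then g is twice differentiable on ℝ³ \ {0}, and there is a constant C > 0 (depending only on κ) such that for every z ≠ 0 the operator norm of the Hessian of g at z satisfies ‖D²g(z)‖ ≤ C(1 + 1/‖z‖). In particular, the second-derivative kernel K₄(x,y), built from the difference of second mixed normal derivatives of G_κ and G₀, has a singularity of order only O(1/‖x−y‖) on the diagonal even though each of its two terms separately blows up like ‖x−y‖⁻³. -/

import Mathlib

set_option maxHeartbeats 1000000
set_option synthInstance.maxHeartbeats 400000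

open Real

noncomputable section

/-- The difference kernel `g(z) = (1 − e^{−κ‖z‖})/(4π‖z‖) = (G₀ − G_κ)(x, x+z)`. -/
def diffKernel (κ : ℝ) (z : EuclideanSpace ℝ (Fin 3)) : ℝ :=
  (1 - Real.exp (-κ * ‖z‖)) / (4 * π * ‖z‖)

/-! ### Auxiliary scalar lemmas -/

/-- If `f 0 = 0` and `f' ≥ 0` on `[0,∞)` then `f ≥ 0` on `[0,∞)`. -/
lemma DK.nonneg_of_hasDerivAt_nonneg {f f' : ℝ → ℝ} (hd : ∀ x, HasDerivAt f (f' x) x)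
    (h0 : f 0 = 0) (h' : ∀ x, 0 ≤ x → 0 ≤ f' x) {x : ℝ} (hx : 0 ≤ x) : 0 ≤ f x := by
  have hmono : MonotoneOn f (Set.Ici (0:ℝ)) := by
    apply monotoneOn_of_deriv_nonneg (convex_Ici 0)
      (fun y _ => (hd y).continuousAt.continuousWithinAt)
      (fun y _ => ((hd y).differentiableAt).differentiableWithinAt)
    intro y hy
    rw [interior_Ici] at hy
    rw [(hd y).deriv]
    exact h' y hy.le
  have := hmono (Set.self_mem_Ici) hx hx
  rwa [h0] at this

lemma DK.exp_taylor2 {x : ℝ} (hx : 0 ≤ x) :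
    0 ≤ 1 - (1 + x) * Real.exp (-x) ∧ 1 - (1 + x) * Real.exp (-x) ≤ x ^ 2 / 2 := by
  have hd : ∀ y : ℝ, HasDerivAt (fun t => 1 - (1 + t) * Real.exp (-t)) (y * Real.exp (-y)) y := by
    intro y
    have he : HasDerivAt (fun t : ℝ => Real.exp (-t)) (-Real.exp (-y)) y := by
      exact ((Real.hasDerivAt_exp (-y)).comp y ((hasDerivAt_id y).neg)).congr_deriv (by simp)
    have := ((hasDerivAt_id y).const_add 1).mul he
    have h2 := (this.const_sub 1)
    refine h2.congr_deriv ?_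
    simp [id]
    ring
  constructor
  · exact DK.nonneg_of_hasDerivAt_nonneg hd (by simp) (fun y hy => by positivity) hx
  · have hd2 : ∀ y : ℝ, HasDerivAt (fun t => t ^ 2 / 2 - (1 - (1 + t) * Real.exp (-t)))
        (y - y * Real.exp (-y)) y := by
      intro y
      have h1 : HasDerivAt (fun t : ℝ => t ^ 2 / 2) y y := by
        simpa using (hasDerivAt_pow 2 y).div_const 2
      exact h1.sub (hd y)
    have := DK.nonneg_of_hasDerivAt_nonneg hd2 (by simp)
      (fun y hy => by
        have : Real.exp (-y) ≤ 1 := Real.exp_le_one_iff.2 (by linarith)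
        nlinarith) hx
    linarith

lemma DK.exp_taylor3 {x : ℝ} (hx : 0 ≤ x) :
    0 ≤ 2 - (x ^ 2 + 2 * x + 2) * Real.exp (-x) ∧
      2 - (x ^ 2 + 2 * x + 2) * Real.exp (-x) ≤ x ^ 3 / 3 := by
  have hd : ∀ y : ℝ, HasDerivAt (fun t => 2 - (t ^ 2 + 2 * t + 2) * Real.exp (-t))
      (y ^ 2 * Real.exp (-y)) y := by
    intro y
    have he : HasDerivAt (fun t : ℝ => Real.exp (-t)) (-Real.exp (-y)) y := by
      exact ((Real.hasDerivAt_exp (-y)).comp y ((hasDerivAt_id y).neg)).congr_deriv (by simp)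
    have hp : HasDerivAt (fun t : ℝ => t ^ 2 + 2 * t + 2) (2 * y + 2) y := by
      have := ((hasDerivAt_pow 2 y).add ((hasDerivAt_id y).const_mul 2)).add_const 2
      simpa using this
    have := (hp.mul he).const_sub 2
    refine this.congr_deriv ?_
    ring
  constructor
  · exact DK.nonneg_of_hasDerivAt_nonneg hd (by norm_num) (fun y hy => by positivity) hx
  · have hd2 : ∀ y : ℝ, HasDerivAt
        (fun t => t ^ 3 / 3 - (2 - (t ^ 2 + 2 * t + 2) * Real.exp (-t)))
        (y ^ 2 - y ^ 2 * Real.exp (-y)) y := by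
      intro y
      have h1 : HasDerivAt (fun t : ℝ => t ^ 3 / 3) (y ^ 2) y := by
        have := (hasDerivAt_pow 3 y).div_const 3
        refine this.congr_deriv ?_
        ring
      exact h1.sub (hd y)
    have := DK.nonneg_of_hasDerivAt_nonneg hd2 (by simp)
      (fun y hy => by
        have : Real.exp (-y) ≤ 1 := Real.exp_le_one_iff.2 (by linarith)
        nlinarith) hx
    linarith

/-! ### One-dimensional derivative formulas -/

/-- First derivative of `r ↦ (1 - e^{-κr})/(4πr)`. -/
def dk1 (κ r : ℝ) : ℝ := (κ * r * Real.exp (-κ * r) + Real.exp (-κ * r) - 1) / (4 * π * r ^ 2)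

/-- Second derivative of `r ↦ (1 - e^{-κr})/(4πr)`. -/
def dk2 (κ r : ℝ) : ℝ :=
  (2 - (κ ^ 2 * r ^ 2 + 2 * κ * r + 2) * Real.exp (-κ * r)) / (4 * π * r ^ 3)

lemma DK.hasDerivAt_expneg (κ r : ℝ) :
    HasDerivAt (fun t : ℝ => Real.exp (-κ * t)) (-κ * Real.exp (-κ * r)) r := by
  have := (Real.hasDerivAt_exp (-κ * r)).comp r ((hasDerivAt_id r).const_mul (-κ))
  have h2 : HasDerivAt (fun t : ℝ => Real.exp (-κ * t)) (Real.exp (-κ * r) * (-κ * 1)) r := this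
  simpa [mul_comm] using h2

lemma DK.hasDerivAt_phi {κ r : ℝ} (hr : r ≠ 0) :
    HasDerivAt (fun t : ℝ => (1 - Real.exp (-κ * t)) / (4 * π * t)) (dk1 κ r) r := by
  have hnum : HasDerivAt (fun t : ℝ => 1 - Real.exp (-κ * t)) (κ * Real.exp (-κ * r)) r := by
    simpa using (DK.hasDerivAt_expneg κ r).const_sub 1
  have hden : HasDerivAt (fun t : ℝ => 4 * π * t) (4 * π) r := by
    simpa using (hasDerivAt_id r).const_mul (4 * π)
  have hd0 : 4 * π * r ≠ 0 := by
    have := Real.pi_ne_zero; positivity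
  have := hnum.div hden hd0
  refine this.congr_deriv ?_
  rw [dk1]
  field_simp
  ring

lemma DK.hasDerivAt_dk1 {κ r : ℝ} (hr : r ≠ 0) : HasDerivAt (dk1 κ) (dk2 κ r) r := by
  have hE := DK.hasDerivAt_expneg κ r
  have hnum : HasDerivAt (fun t : ℝ => κ * t * Real.exp (-κ * t) + Real.exp (-κ * t) - 1)
      (-κ ^ 2 * r * Real.exp (-κ * r)) r := by
    have h1 : HasDerivAt (fun t : ℝ => κ * t) κ r := by
      simpa using (hasDerivAt_id r).const_mul κ
    have := ((h1.mul hE).add hE).sub_const 1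
    refine this.congr_deriv ?_
    ring
  have hden : HasDerivAt (fun t : ℝ => 4 * π * t ^ 2) (4 * π * (2 * r)) r := by
    have := (hasDerivAt_pow 2 r).const_mul (4 * π)
    simpa using this
  have hd0 : 4 * π * r ^ 2 ≠ 0 := by
    have := Real.pi_ne_zero; positivity
  have := hnum.div hden hd0
  have heq : dk1 κ = fun t : ℝ =>
      (κ * t * Real.exp (-κ * t) + Real.exp (-κ * t) - 1) / (4 * π * t ^ 2) := rfl
  rw [heq]
  refine this.congr_deriv ?_
  rw [dk2]
  field_simp
  ring

/-- Derivative of `r ↦ dk1 κ r / r`. -/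
lemma DK.hasDerivAt_dk1_div {κ r : ℝ} (hr : r ≠ 0) :
    HasDerivAt (fun t : ℝ => dk1 κ t / t) ((dk2 κ r * r - dk1 κ r) / r ^ 2) r := by
  have := (DK.hasDerivAt_dk1 (κ := κ) hr).div (hasDerivAt_id r) hr
  refine this.congr_deriv ?_
  simp

/-! ### Bounds on `dk1`, `dk2` -/

lemma DK.dk1_bound {κ r : ℝ} (hκ : 0 ≤ κ) (hr : 0 < r) : |dk1 κ r| ≤ κ ^ 2 / (8 * π) := by
  have hx : 0 ≤ κ * r := by positivity
  obtain ⟨h1, h2⟩ := DK.exp_taylor2 hx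
  have hnum : |κ * r * Real.exp (-κ * r) + Real.exp (-κ * r) - 1| ≤ (κ * r) ^ 2 / 2 := by
    rw [neg_mul, abs_le]
    constructor
    · nlinarith [h2]
    · nlinarith [h1]
  have hden : (0:ℝ) < 4 * π * r ^ 2 := by have := Real.pi_pos; positivity
  rw [dk1, abs_div, abs_of_pos hden]
  rw [div_le_iff₀ hden]
  have hπ := Real.pi_pos
  calc |κ * r * Real.exp (-κ * r) + Real.exp (-κ * r) - 1| ≤ (κ * r) ^ 2 / 2 := hnum
    _ = κ ^ 2 / (8 * π) * (4 * π * r ^ 2) := by field_simp; ring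

lemma DK.dk2_bound {κ r : ℝ} (hκ : 0 ≤ κ) (hr : 0 < r) : |dk2 κ r| ≤ κ ^ 3 / (12 * π) := by
  have hx : 0 ≤ κ * r := by positivity
  obtain ⟨h1, h2⟩ := DK.exp_taylor3 hx
  have hnum : |2 - (κ ^ 2 * r ^ 2 + 2 * κ * r + 2) * Real.exp (-κ * r)| ≤ (κ * r) ^ 3 / 3 := by
    rw [neg_mul, abs_le]
    constructor
    · nlinarith [h1]
    · nlinarith [h2]
  have hden : (0:ℝ) < 4 * π * r ^ 3 := by have := Real.pi_pos; positivity
  rw [dk2, abs_div, abs_of_pos hden]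
  rw [div_le_iff₀ hden]
  have hπ := Real.pi_pos
  calc |2 - (κ ^ 2 * r ^ 2 + 2 * κ * r + 2) * Real.exp (-κ * r)| ≤ (κ * r) ^ 3 / 3 := hnum
    _ = κ ^ 3 / (12 * π) * (4 * π * r ^ 3) := by field_simp; ring

/-! ### The Fréchet derivatives -/

/-- Fréchet derivative of the norm away from the origin. -/
lemma DK.hasFDerivAt_norm {z : EuclideanSpace ℝ (Fin 3)} (hz : z ≠ 0) :
    HasFDerivAt (fun x : EuclideanSpace ℝ (Fin 3) => ‖x‖) (‖z‖⁻¹ • innerSL ℝ z) z := by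
  have hz' : ‖z‖ ≠ 0 := norm_ne_zero_iff.2 hz
  have h1 : HasFDerivAt (fun x : EuclideanSpace ℝ (Fin 3) => ‖x‖ ^ 2) (2 • innerSL ℝ z) z :=
    (hasStrictFDerivAt_norm_sq z).hasFDerivAt
  have h2 : HasDerivAt Real.sqrt (1 / (2 * Real.sqrt (‖z‖ ^ 2))) (‖z‖ ^ 2) :=
    Real.hasDerivAt_sqrt (by positivity)
  have h3 := h2.comp_hasFDerivAt z h1
  have h4 : (Real.sqrt ∘ fun x : EuclideanSpace ℝ (Fin 3) => ‖x‖ ^ 2)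
      = fun x : EuclideanSpace ℝ (Fin 3) => ‖x‖ := by
    funext x
    simp [Function.comp, Real.sqrt_sq (norm_nonneg x)]
  rw [h4] at h3
  refine h3.congr_fderiv (Eq.symm ?_)
  ext y
  rw [Real.sqrt_sq (norm_nonneg z)]
  simp only [ContinuousLinearMap.smul_apply, smul_eq_mul, two_smul,
    ContinuousLinearMap.add_apply]
  field_simp
  ring

/-- The inner product as a real-bilinear continuous map. -/
def dkInner : EuclideanSpace ℝ (Fin 3) →L[ℝ] EuclideanSpace ℝ (Fin 3) →L[ℝ] ℝ :=
  innerSL ℝ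

lemma DK.dkInner_apply (z : EuclideanSpace ℝ (Fin 3)) : dkInner z = innerSL ℝ z := rfl

lemma DK.dkInner_norm (z : EuclideanSpace ℝ (Fin 3)) : ‖dkInner z‖ = ‖z‖ :=
  innerSL_apply_norm (𝕜 := ℝ) z

lemma DK.dkInner_norm_le : ‖dkInner‖ ≤ 1 := norm_innerSL_le ℝ

/-- The first derivative of `diffKernel` as a function of `z`. -/
def dkA (κ : ℝ) (z : EuclideanSpace ℝ (Fin 3)) : EuclideanSpace ℝ (Fin 3) →L[ℝ] ℝ :=
  (dk1 κ ‖z‖ / ‖z‖) • dkInner z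

lemma DK.hasFDerivAt_diffKernel {κ : ℝ} {z : EuclideanSpace ℝ (Fin 3)} (hz : z ≠ 0) :
    HasFDerivAt (diffKernel κ) (dkA κ z) z := by
  have hz' : ‖z‖ ≠ 0 := norm_ne_zero_iff.2 hz
  have h1 := (DK.hasDerivAt_phi (κ := κ) hz').comp_hasFDerivAt z (DK.hasFDerivAt_norm hz)
  have h2 : ((fun t : ℝ => (1 - Real.exp (-κ * t)) / (4 * π * t)) ∘
      fun x : EuclideanSpace ℝ (Fin 3) => ‖x‖) = diffKernel κ := rfl
  rw [h2] at h1
  refine h1.congr_fderiv (Eq.symm ?_)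
  rw [dkA, DK.dkInner_apply, smul_smul, div_eq_mul_inv]

/-- The second derivative of `diffKernel` as a function of `z`. -/
def dkB (κ : ℝ) (z : EuclideanSpace ℝ (Fin 3)) :
    EuclideanSpace ℝ (Fin 3) →L[ℝ] EuclideanSpace ℝ (Fin 3) →L[ℝ] ℝ :=
  (dk1 κ ‖z‖ / ‖z‖) • dkInner +
    (((dk2 κ ‖z‖ * ‖z‖ - dk1 κ ‖z‖) / ‖z‖ ^ 2 * ‖z‖⁻¹) • dkInner z).smulRight (dkInner z)

lemma DK.hasFDerivAt_dkA {κ : ℝ} {z : EuclideanSpace ℝ (Fin 3)} (hz : z ≠ 0) :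
    HasFDerivAt (dkA κ) (dkB κ z) z := by
  have hz' : ‖z‖ ≠ 0 := norm_ne_zero_iff.2 hz
  have hc : HasFDerivAt (fun x : EuclideanSpace ℝ (Fin 3) => dk1 κ ‖x‖ / ‖x‖)
      (((dk2 κ ‖z‖ * ‖z‖ - dk1 κ ‖z‖) / ‖z‖ ^ 2) • (‖z‖⁻¹ • innerSL ℝ z)) z := by
    exact (DK.hasDerivAt_dk1_div (κ := κ) hz').comp_hasFDerivAt z (DK.hasFDerivAt_norm hz)
  have hf : HasFDerivAt (fun x : EuclideanSpace ℝ (Fin 3) => dkInner x) dkInner z :=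
    dkInner.hasFDerivAt
  have h := hc.smul hf
  have heq : (fun y : EuclideanSpace ℝ (Fin 3) => (dk1 κ ‖y‖ / ‖y‖) • dkInner y) = dkA κ := rfl
  replace h : HasFDerivAt (dkA κ) _ z := h
  have hB : dkB κ z = (dk1 κ ‖z‖ / ‖z‖) • dkInner +
      (((dk2 κ ‖z‖ * ‖z‖ - dk1 κ ‖z‖) / ‖z‖ ^ 2) • ‖z‖⁻¹ • innerSL ℝ z).smulRight
        (dkInner z) := by
    rw [dkB, DK.dkInner_apply, smul_smul]
  rw [hB]
  exact h

/-! ### Norm bound for the second derivative -/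

lemma DK.dkB_norm_bound {κ : ℝ} (hκ : 0 ≤ κ) {z : EuclideanSpace ℝ (Fin 3)} (hz : z ≠ 0) :
    ‖dkB κ z‖ ≤ κ ^ 3 / (12 * π) + κ ^ 2 / (4 * π) * (1 / ‖z‖) := by
  have hr : 0 < ‖z‖ := norm_pos_iff.2 hz
  have hz' : ‖z‖ ≠ 0 := hr.ne'
  have hπ := Real.pi_pos
  have h1 : ‖(dk1 κ ‖z‖ / ‖z‖) • dkInner‖ ≤ |dk1 κ ‖z‖| / ‖z‖ := by
    calc ‖(dk1 κ ‖z‖ / ‖z‖) • dkInner‖ ≤ ‖dk1 κ ‖z‖ / ‖z‖‖ * ‖dkInner‖ :=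
          ContinuousLinearMap.opNorm_smul_le _ _
      _ ≤ ‖dk1 κ ‖z‖ / ‖z‖‖ * 1 := by
          gcongr
          exact DK.dkInner_norm_le
      _ = |dk1 κ ‖z‖| / ‖z‖ := by
          rw [mul_one, Real.norm_eq_abs, abs_div, abs_of_pos hr]
  have h2 : ‖(((dk2 κ ‖z‖ * ‖z‖ - dk1 κ ‖z‖) / ‖z‖ ^ 2 * ‖z‖⁻¹) • dkInner z).smulRight
      (dkInner z)‖ ≤ |dk2 κ ‖z‖| + |dk1 κ ‖z‖| / ‖z‖ := by
    rw [ContinuousLinearMap.norm_smulRight_apply, norm_smul, DK.dkInner_norm]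
    have heq : ‖(dk2 κ ‖z‖ * ‖z‖ - dk1 κ ‖z‖) / ‖z‖ ^ 2 * ‖z‖⁻¹‖ * (‖z‖ * ‖z‖)
        = |dk2 κ ‖z‖ * ‖z‖ - dk1 κ ‖z‖| / ‖z‖ := by
      rw [Real.norm_eq_abs, abs_mul, abs_div, abs_of_pos (pow_pos hr 2),
        abs_of_pos (inv_pos.2 hr)]
      field_simp
    rw [mul_assoc, heq]
    calc |dk2 κ ‖z‖ * ‖z‖ - dk1 κ ‖z‖| / ‖z‖
        ≤ (|dk2 κ ‖z‖| * ‖z‖ + |dk1 κ ‖z‖|) / ‖z‖ := by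
          gcongr
          calc |dk2 κ ‖z‖ * ‖z‖ - dk1 κ ‖z‖| ≤ |dk2 κ ‖z‖ * ‖z‖| + |dk1 κ ‖z‖| :=
                abs_sub _ _
            _ = |dk2 κ ‖z‖| * ‖z‖ + |dk1 κ ‖z‖| := by rw [abs_mul, abs_of_pos hr]
      _ = |dk2 κ ‖z‖| + |dk1 κ ‖z‖| / ‖z‖ := by field_simp
  have hb1 := DK.dk1_bound (r := ‖z‖) hκ hr
  have hb2 := DK.dk2_bound (r := ‖z‖) hκ hr
  have hmain : ‖dkB κ z‖ ≤ |dk1 κ ‖z‖| / ‖z‖ + (|dk2 κ ‖z‖| + |dk1 κ ‖z‖| / ‖z‖) := by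
    rw [dkB]
    have hsum := add_le_add h1 h2
    exact (ContinuousLinearMap.opNorm_add_le _ _).trans hsum
  have h4 : |dk1 κ ‖z‖| / ‖z‖ ≤ κ ^ 2 / (8 * π) * (1 / ‖z‖) := by
    rw [div_eq_mul_one_div]
    gcongr
  have h5 : |dk2 κ ‖z‖| ≤ κ ^ 3 / (12 * π) := hb2
  have h6 : (0:ℝ) ≤ 1 / ‖z‖ := by positivity
  have h7 : 2 * (κ ^ 2 / (8 * π) * (1 / ‖z‖)) = κ ^ 2 / (4 * π) * (1 / ‖z‖) := by ring
  linarith [hmain, h4, h5, h7]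

/-! ### Main theorem -/

/-- For `κ ≥ 0`, the kernel `g(z) = (1 − e^{−κ‖z‖})/(4π‖z‖)` is twice differentiable away from
the origin, and there is `C > 0` (depending only on `κ`) such that the operator norm of its
Hessian satisfies `‖D²g(z)‖ ≤ C(1 + 1/‖z‖)` for every `z ≠ 0`: the second-derivative kernel has
a singularity of order only `O(1/‖z‖)`. -/
theorem diffKernel_hessian_weakly_singular (κ : ℝ) (hκ : 0 ≤ κ) :
    ContDiffOn ℝ 2 (diffKernel κ) {(0 : EuclideanSpace ℝ (Fin 3))}ᶜ ∧
    ∃ C > 0, ∀ z : EuclideanSpace ℝ (Fin 3), z ≠ 0 →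
      ‖fderiv ℝ (fderiv ℝ (diffKernel κ)) z‖ ≤ C * (1 + 1 / ‖z‖) := by
  have hπ := Real.pi_pos
  constructor
  · intro z hz
    have hz0 : z ≠ 0 := hz
    have hz' : ‖z‖ ≠ 0 := norm_ne_zero_iff.2 hz0
    apply ContDiffAt.contDiffWithinAt
    have hφ : ContDiffAt ℝ 2 (fun t : ℝ => (1 - Real.exp (-κ * t)) / (4 * π * t)) ‖z‖ := by
      apply ContDiffAt.div
      · exact contDiffAt_const.sub
          (Real.contDiff_exp.contDiffAt.comp _ (contDiffAt_const.mul contDiffAt_id))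
      · exact contDiffAt_const.mul contDiffAt_id
      · intro h
        exact hz' (by
          have : (4 * π) * ‖z‖ = 0 := h
          rcases mul_eq_zero.1 this with h' | h'
          · exact absurd h' (by positivity)
          · exact h')
    exact hφ.comp z (contDiffAt_norm ℝ hz0)
  · refine ⟨κ ^ 3 / (12 * π) + κ ^ 2 / (4 * π) + 1, by positivity, fun z hz => ?_⟩
    have hfd : fderiv ℝ (fderiv ℝ (diffKernel κ)) z = dkB κ z := by
      have hev : fderiv ℝ (diffKernel κ) =ᶠ[nhds z] dkA κ := by
        filter_upwards [isOpen_compl_singleton.mem_nhds hz] with x hx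
        exact (DK.hasFDerivAt_diffKernel hx).fderiv
      rw [hev.fderiv_eq, (DK.hasFDerivAt_dkA hz).fderiv]
    rw [hfd]
    have hb := DK.dkB_norm_bound hκ hz
    have h6 : (0:ℝ) ≤ 1 / ‖z‖ := by positivity
    have hp2 : (0:ℝ) ≤ κ ^ 2 / (4 * π) := by positivity
    have hp3 : (0:ℝ) ≤ κ ^ 3 / (12 * π) := by positivity
    have hc2 : κ ^ 2 / (4 * π) ≤ κ ^ 3 / (12 * π) + κ ^ 2 / (4 * π) + 1 := by linarith
    have hA : κ ^ 2 / (4 * π) * (1 / ‖z‖)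
        ≤ (κ ^ 3 / (12 * π) + κ ^ 2 / (4 * π) + 1) * (1 / ‖z‖) :=
      mul_le_mul_of_nonneg_right hc2 h6
    have h8 : (κ ^ 3 / (12 * π) + κ ^ 2 / (4 * π) + 1) * (1 + 1 / ‖z‖)
        = κ ^ 3 / (12 * π) + κ ^ 2 / (4 * π) + 1
          + (κ ^ 3 / (12 * π) + κ ^ 2 / (4 * π) + 1) * (1 / ‖z‖) := by ring
    calc ‖dkB κ z‖ ≤ κ ^ 3 / (12 * π) + κ ^ 2 / (4 * π) * (1 / ‖z‖) := hb
      _ ≤ (κ ^ 3 / (12 * π) + κ ^ 2 / (4 * π) + 1) * (1 + 1 / ‖z‖) := by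
          rw [h8]
          linarith

end
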